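/- Let κ be regular uncountable with |α|^{ℵ₀} < κ for all α < κ, and suppose every stationary subset of κ admits a Δ-system refinement: explicitly, for every stationary S ⊆ κ consisting of ordinals of uncountable cofinality and every family ⟨B_α : α ∈ S⟩ of countable sets, there is a stationary Z ⊆ S on which the family forms a Δ-system. (This is Lemma 5.4(a) specialized to the club filter with θ = ℵ₁.) -/

import Mathlib

universe u

/-- `C` is a closed unbounded subset of the ordinal `κ`. -/
def IsClubIn (C : Set Ordinal.{u}) (κ : Ordinal.{u}) : Prop :=
  C ⊆ Set.Iio κ ∧ (∀ γ < κ, ∃ β ∈ C, γ < β ∧ β < κ) ∧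
    ∀ δ < κ, 0 < δ → (∀ γ < δ, ∃ β ∈ C, γ < β ∧ β < δ) → δ ∈ C

/-- `S` is a stationary subset of the ordinal `κ`. -/
def IsStationaryIn (S : Set Ordinal.{u}) (κ : Ordinal.{u}) : Prop :=
  ∀ C, IsClubIn C κ → (S ∩ C).Nonempty

open Cardinal Set

namespace DeltaAux

theorem omega_limit {k : Ordinal.{u}} (hk : ℵ₀ < k.cof) (h : Ordinal.{u} → Ordinal.{u})
    (hh : ∀ γ < k, γ < h γ ∧ h γ < k) {γ₀ : Ordinal.{u}} (hγ₀ : γ₀ < k) :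
    ∃ δ, γ₀ < δ ∧ δ < k ∧ 0 < δ ∧ ∃ s : ℕ → Ordinal.{u},
      s 0 = γ₀ ∧ (∀ n, s (n + 1) = h (s n)) ∧ (∀ n, s n < k) ∧
      (∀ n, s n < δ) ∧ (∀ x < δ, ∃ n, x < s n) := by
  set s : ℕ → Ordinal.{u} := fun n => h^[n] γ₀ with hs
  have hs0 : s 0 = γ₀ := rfl
  have hsucc : ∀ n, s (n + 1) = h (s n) := fun n => Function.iterate_succ_apply' h n γ₀
  have hlt : ∀ n, s n < k := by
    intro n; induction n with
    | zero => exact hγ₀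
    | succ n ih => rw [hsucc]; exact (hh _ ih).2
  have hmono : ∀ n, s n < s (n + 1) := fun n => by rw [hsucc]; exact (hh _ (hlt n)).1
  set δ := ⨆ n, s n with hδ
  have hδk : δ < k := Ordinal.iSup_lt_ord_lift (by simpa using hk) hlt
  have hle : ∀ n, s n ≤ δ := fun n => le_ciSup (Ordinal.bddAbove_range _) n
  have hltδ : ∀ n, s n < δ := fun n => lt_of_lt_of_le (hmono n) (hle (n + 1))
  have hγδ : γ₀ < δ := hs0 ▸ hltδ 0
  exact ⟨δ, hγδ, hδk, lt_of_le_of_lt zero_le hγδ, s, hs0, hsucc, hlt, hltδ,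
    fun x hx => Ordinal.lt_iSup_iff.mp hx⟩

theorem small_of_lt_lift {ι : Type (u + 1)} {c : Cardinal.{u}}
    (hι : #ι < Cardinal.lift.{u + 1} c) : Small.{u} ι := by
  have h1 : #ι ≤ #(ULift.{u + 1} c.out) := by
    rw [Cardinal.mk_uLift, Cardinal.mk_out]; exact hι.le
  obtain ⟨e⟩ := (Cardinal.le_def _ _).mp h1
  exact small_of_injective (f := fun i => Equiv.ulift (e i)) fun a b hab => by
    apply e.injective; exact Equiv.ulift.injective hab

theorem isClubIn_iInter {k : Ordinal.{u}} (hk : ℵ₀ < k.cof)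
    {ι : Type (u + 1)} [Nonempty ι] (hι : #ι < Cardinal.lift.{u + 1} k.cof)
    {C : ι → Set Ordinal.{u}} (hC : ∀ i, IsClubIn (C i) k) :
    IsClubIn (⋂ i, C i) k := by
  have hsm : Small.{u} ι := small_of_lt_lift hι
  have hshr : #(Shrink.{u} ι) < k.cof := by
    rw [← Cardinal.lift_lt.{u, u + 1}]
    calc Cardinal.lift.{u + 1} #(Shrink.{u} ι) = Cardinal.lift.{u} #ι :=
          Cardinal.lift_mk_shrink'.{u + 1, u} ι
      _ = #ι := Cardinal.lift_id'.{u, u + 1} _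
      _ < Cardinal.lift.{u + 1} k.cof := hι
  classical
  refine ⟨fun x hx => (hC (Classical.arbitrary ι)).1 (Set.mem_iInter.mp hx _), ?_, ?_⟩
  · -- unbounded
    intro γ hγ
    set g : ι → Ordinal.{u} → Ordinal.{u} := fun i y =>
      if hy : y < k then ((hC i).2.1 y hy).choose else 0 with hg
    have hgspec : ∀ i, ∀ y, (hy : y < k) → g i y ∈ C i ∧ y < g i y ∧ g i y < k := by
      intro i y hy
      have := ((hC i).2.1 y hy).choose_spec
      simp only [hg, dif_pos hy]
      exact ⟨this.1, this.2.1, this.2.2⟩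
    set h : Ordinal.{u} → Ordinal.{u} := fun y =>
      ⨆ j : Shrink.{u} ι, g ((equivShrink ι).symm j) y with hhdef
    have hh : ∀ y < k, y < h y ∧ h y < k := by
      intro y hy
      constructor
      · refine lt_of_lt_of_le (hgspec (Classical.arbitrary ι) y hy).2.1 ?_
        have := le_ciSup (Ordinal.bddAbove_range
          (fun j : Shrink.{u} ι => g ((equivShrink ι).symm j) y))
          (equivShrink ι (Classical.arbitrary ι))
        rwa [Equiv.symm_apply_apply] at this
      · exact Ordinal.iSup_lt_ord hshr fun j => (hgspec _ y hy).2.2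
    obtain ⟨δ, hγδ, hδk, hδ0, s, hs0, hsucc, hsk, hsδ, hcof⟩ := omega_limit hk h hh hγ
    refine ⟨δ, Set.mem_iInter.mpr fun i => ?_, hγδ, hδk⟩
    refine (hC i).2.2 δ hδk hδ0 fun x hx => ?_
    obtain ⟨n, hn⟩ := hcof x hx
    refine ⟨g i (s n), (hgspec i (s n) (hsk n)).1, lt_trans hn (hgspec i (s n) (hsk n)).2.1, ?_⟩
    calc g i (s n) ≤ h (s n) := by
          have := le_ciSup (Ordinal.bddAbove_range
            (fun j : Shrink.{u} ι => g ((equivShrink ι).symm j) (s n))) (equivShrink ι i)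
          rwa [Equiv.symm_apply_apply] at this
      _ = s (n + 1) := (hsucc n).symm
      _ < δ := hsδ (n + 1)
  · -- closed
    intro δ hδk hδ0 hacc
    refine Set.mem_iInter.mpr fun i => (hC i).2.2 δ hδk hδ0 fun x hx => ?_
    obtain ⟨β, hβ, h1, h2⟩ := hacc x hx
    exact ⟨β, Set.mem_iInter.mp hβ i, h1, h2⟩

theorem isClubIn_Iio {k : Ordinal.{u}} (hk : Order.IsSuccLimit k) : IsClubIn (Set.Iio k) k := by
  refine ⟨le_refl _, fun γ hγ => ?_, fun δ hδ _ _ => hδ⟩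
  have h1 : γ + 1 < k := by rw [Ordinal.add_one_eq_succ]; exact hk.succ_lt hγ
  exact ⟨γ + 1, h1, by rw [Ordinal.add_one_eq_succ]; exact Order.lt_succ γ, h1⟩

theorem isClubIn_inter {k : Ordinal.{u}} (hk : ℵ₀ < k.cof) {C D : Set Ordinal.{u}}
    (hC : IsClubIn C k) (hD : IsClubIn D k) : IsClubIn (C ∩ D) k := by
  have hcard : #(ULift.{u + 1} Bool) < Cardinal.lift.{u + 1} k.cof := by
    refine lt_of_lt_of_le ?_ ((Cardinal.lift_le.mpr hk.le).trans_eq' Cardinal.lift_aleph0)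
    exact Cardinal.lt_aleph0_of_finite _
  have h := isClubIn_iInter hk hcard
    (C := fun b : ULift.{u + 1} Bool => if b.down then C else D)
    (fun b => by
      rcases b with ⟨b⟩; cases b
      · simpa using hD
      · simpa using hC)
  have he : (⋂ b : ULift.{u + 1} Bool, if b.down then C else D) = C ∩ D := by
    ext x
    simp only [Set.mem_iInter, Set.mem_inter_iff]
    constructor
    · intro hx
      have h1 := hx ⟨true⟩
      have h2 := hx ⟨false⟩
      simp only [if_true, if_false] at h1 h2
      exact ⟨h1, h2⟩
    · rintro ⟨h1, h2⟩ ⟨b⟩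
      cases b
      · simpa using h2
      · simpa using h1
  rwa [he] at h

theorem isStationaryIn_inter_club {k : Ordinal.{u}} (hk : ℵ₀ < k.cof)
    {S C : Set Ordinal.{u}} (hS : IsStationaryIn S k) (hC : IsClubIn C k) :
    IsStationaryIn (S ∩ C) k := by
  intro D hD
  obtain ⟨x, hx⟩ := hS (C ∩ D) (isClubIn_inter hk hC hD)
  exact ⟨x, ⟨hx.1, hx.2.1⟩, hx.2.2⟩

theorem exists_bound {α : Ordinal.{u}} (hα : ℵ₀ < α.cof) {s : Set Ordinal.{u}}
    (hs : s.Countable) (hsub : s ⊆ Set.Iio α) : ∃ γ < α, s ⊆ Set.Iio γ := by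
  have hlim : Order.IsSuccLimit α := Ordinal.aleph0_le_cof.mp hα.le
  rcases s.eq_empty_or_nonempty with rfl | hne
  · exact ⟨1, (Ordinal.one_lt_of_isSuccLimit hlim), by simp⟩
  · have h2 : Countable ↥s := hs.to_subtype
    have h3 : Nonempty ↥s := hne.to_subtype
    obtain ⟨f, hf⟩ := exists_surjective_nat ↥s
    have hg : (⨆ n, (f n).1) < α :=
      Ordinal.iSup_lt_ord_lift (by simpa using hα) fun n => hsub (f n).2
    have hg1 : (⨆ n, (f n).1) + 1 < α := by
      rw [Ordinal.add_one_eq_succ]; exact hlim.succ_lt hg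
    refine ⟨_, hg1, fun x hx => ?_⟩
    obtain ⟨n, hn⟩ := hf ⟨x, hx⟩
    have hxg : x ≤ ⨆ n, (f n).1 := by
      have := le_ciSup (Ordinal.bddAbove_range fun n => (f n).1) n
      rwa [hn] at this
    exact lt_of_le_of_lt hxg (by rw [Ordinal.add_one_eq_succ]; exact Order.lt_succ _)

theorem isClubIn_diag {k : Ordinal.{u}} (hk : ℵ₀ < k.cof) (hlim : Order.IsSuccLimit k)
    (hcard : ∀ γ < k, γ.card < k.cof) (C : Ordinal.{u} → Set Ordinal.{u})
    (hC : ∀ γ < k, IsClubIn (C γ) k) :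
    IsClubIn {β | β < k ∧ ∀ γ < β, β ∈ C γ} k := by
  classical
  refine ⟨fun x hx => hx.1, ?_, ?_⟩
  · -- unbounded
    intro x hx
    have key : ∀ y, y < k → ∃ β, (∀ γ ≤ y, β ∈ C γ) ∧ y < β ∧ β < k := by
      intro y hy
      have hy1 : y + 1 < k := by rw [Ordinal.add_one_eq_succ]; exact hlim.succ_lt hy
      have hne : Nonempty ↥(Set.Iio (y + 1)) :=
        ⟨⟨y, by rw [Ordinal.add_one_eq_succ]; exact Order.lt_succ y⟩⟩
      have hι : #↥(Set.Iio (y + 1)) < Cardinal.lift.{u + 1} k.cof := by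
        rw [Ordinal.mk_Iio_ordinal]
        exact Cardinal.lift_lt.mpr (hcard _ hy1)
      have hclub : IsClubIn (⋂ i : ↥(Set.Iio (y + 1)), C i.1) k :=
        isClubIn_iInter hk hι fun i => hC i.1 (lt_trans i.2 hy1)
      obtain ⟨β, hβ, h1, h2⟩ := hclub.2.1 y hy
      refine ⟨β, fun γ hγ => Set.mem_iInter.mp hβ
        ⟨γ, by simp only [Set.mem_Iio, Ordinal.add_one_eq_succ, Order.lt_succ_iff]; exact hγ⟩, h1, h2⟩
    choose! f hf using key
    set h : Ordinal.{u} → Ordinal.{u} := fun y => if hy : y < k then f y else 0 with hhdef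
    have hh : ∀ y < k, y < h y ∧ h y < k := by
      intro y hy
      rw [hhdef]; simp only [dif_pos hy]
      exact ⟨(hf y hy).2.1, (hf y hy).2.2⟩
    obtain ⟨δ, hγδ, hδk, hδ0, s, hs0, hsucc, hsk, hsδ, hcof⟩ := omega_limit hk h hh hx
    have hsmono : StrictMono s := strictMono_nat_of_lt_succ fun n => by
      rw [hsucc n]; exact (hh _ (hsk n)).1
    refine ⟨δ, ⟨hδk, fun γ hγ => ?_⟩, hγδ, hδk⟩
    have hγk : γ < k := lt_trans hγ hδk
    obtain ⟨n, hn⟩ := hcof γ hγ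
    refine (hC γ hγk).2.2 δ hδk hδ0 fun x' hx' => ?_
    obtain ⟨n', hn'⟩ := hcof x' hx'
    set m := max n n' with hm
    have h1 : s (m + 1) ∈ C γ := by
      have := (hf (s m) (hsk m)).1 γ (le_of_lt (lt_of_lt_of_le hn (hsmono.monotone (le_max_left n n'))))
      rw [hsucc m, hhdef]; simpa only [dif_pos (hsk m)] using this
    refine ⟨s (m + 1), h1, ?_, hsδ (m + 1)⟩
    calc x' < s n' := hn'
      _ ≤ s m := hsmono.monotone (le_max_right n n')
      _ < s (m + 1) := hsmono (Nat.lt_succ_self m)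
  · -- closed
    intro δ hδk hδ0 hacc
    refine ⟨hδk, fun γ hγ => ?_⟩
    refine (hC γ (lt_trans hγ hδk)).2.2 δ hδk hδ0 fun x hx => ?_
    obtain ⟨β, hβ, h1, h2⟩ := hacc (max γ x) (max_lt hγ hx)
    exact ⟨β, hβ.2 γ (lt_of_le_of_lt (le_max_left γ x) h1),
      lt_of_le_of_lt (le_max_right γ x) h1, h2⟩

theorem delta_ord (κ : Cardinal.{u}) (hreg : κ.IsRegular) (hunc : ℵ₀ < κ)
    (hsmall : ∀ α : Ordinal.{u}, α < κ.ord → α.card ^ (ℵ₀ : Cardinal.{u}) < κ)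
    (S : Set Ordinal.{u})
    (hSsub : S ⊆ {δ | δ < κ.ord ∧ ℵ₀ < δ.cof})
    (hSstat : IsStationaryIn S κ.ord)
    (b : Ordinal.{u} → Set Ordinal.{u})
    (hb1 : ∀ α ∈ S, b α ⊆ Set.Iio κ.ord)
    (hb2 : ∀ α ∈ S, #(b α) ≤ ℵ₀) :
    ∃ Z ⊆ S, IsStationaryIn Z κ.ord ∧
      ∃ r : Set Ordinal.{u}, ∀ α ∈ Z, ∀ β ∈ Z, α ≠ β → b α ∩ b β = r := by
  classical
  set k := κ.ord with hkdef
  have hcof : k.cof = κ := hreg.cof_eq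
  have hk : ℵ₀ < k.cof := by rw [hcof]; exact hunc
  have hlim : Order.IsSuccLimit k := Cardinal.isSuccLimit_ord hreg.aleph0_le
  have hcard : ∀ γ < k, γ.card < k.cof := fun γ hγ => by
    rw [hcof]; exact Cardinal.lt_ord.mp hγ
  set Sg : Ordinal.{u} → Set Ordinal.{u} :=
    fun γ => {α | α ∈ S ∧ b α ∩ Set.Iio α ⊆ Set.Iio γ} with hSgdef
  -- Step 1 : some Sg γ is stationary
  have step1 : ∃ γ < k, IsStationaryIn (Sg γ) k := by
    by_contra hcon
    push_neg at hcon
    have hex : ∀ γ, ∃ D, IsClubIn D k ∧ (γ < k → Sg γ ∩ D = ∅) := by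
      intro γ
      by_cases hγ : γ < k
      · have h1 := hcon γ hγ
        rw [IsStationaryIn] at h1; push_neg at h1
        obtain ⟨D, hD, hDe⟩ := h1
        exact ⟨D, hD, fun _ => hDe⟩
      · exact ⟨Set.Iio k, isClubIn_Iio hlim, fun h => absurd h hγ⟩
    choose D hD1 hD2 using hex
    have hdiag := isClubIn_diag hk hlim hcard D (fun γ _ => hD1 γ)
    obtain ⟨α, hαS, hαd⟩ := hSstat _ hdiag
    obtain ⟨hαk, hαcof⟩ := hSsub hαS
    have hcnt : (b α ∩ Set.Iio α).Countable :=
      Set.Countable.mono Set.inter_subset_left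
        (Cardinal.le_aleph0_iff_set_countable.mp (hb2 α hαS))
    obtain ⟨γ, hγα, hγsub⟩ := exists_bound hαcof hcnt Set.inter_subset_right
    have hmem : α ∈ Sg γ ∩ D γ := ⟨⟨hαS, hγsub⟩, hαd.2 γ hγα⟩
    rw [hD2 γ (lt_trans hγα hαk)] at hmem
    exact hmem
  obtain ⟨γ₀, hγ₀k, hS1⟩ := step1
  -- Step 2 : some fiber is stationary
  set P : Set (Set Ordinal.{u}) := {p | p ⊆ Set.Iio γ₀ ∧ #↥p ≤ ℵ₀} with hPdef
  have hPne : Nonempty ↥P := ⟨⟨∅, by simp, by simp⟩⟩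
  have hPcard : #↥P < Cardinal.lift.{u + 1} κ := by
    have hωk : (Ordinal.omega0 : Ordinal.{u}) < k := by
      rw [Cardinal.lt_ord, Ordinal.card_omega0]; exact hunc
    have hδk : max γ₀ Ordinal.omega0 < k := max_lt hγ₀k hωk
    have h1 : #↥P ≤ (max #↥(Set.Iio γ₀) ℵ₀) ^ (ℵ₀ : Cardinal.{u + 1}) :=
      Cardinal.mk_bounded_subset_le _ _
    have h2 : (max #↥(Set.Iio γ₀) ℵ₀ : Cardinal.{u + 1}) ^ (ℵ₀ : Cardinal.{u + 1}) =
        Cardinal.lift.{u + 1} ((max γ₀.card ℵ₀) ^ (ℵ₀ : Cardinal.{u})) := by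
      rw [Cardinal.lift_power, Cardinal.lift_max, Cardinal.lift_aleph0,
        Ordinal.mk_Iio_ordinal]
    have h3 : (max γ₀.card ℵ₀) ^ (ℵ₀ : Cardinal.{u}) < κ := by
      refine lt_of_le_of_lt ?_ (hsmall _ hδk)
      refine Cardinal.power_le_power_right (max_le ?_ ?_)
      · exact Ordinal.card_le_card (le_max_left _ _)
      · rw [← Ordinal.card_omega0]; exact Ordinal.card_le_card (le_max_right _ _)
    calc #↥P ≤ _ := h1
      _ = _ := h2
      _ < Cardinal.lift.{u + 1} κ := Cardinal.lift_lt.mpr h3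
  set T : Set Ordinal.{u} → Set Ordinal.{u} :=
    fun p => {α | α ∈ Sg γ₀ ∧ b α ∩ Set.Iio α = p} with hTdef
  have step2 : ∃ p ∈ P, IsStationaryIn (T p) k := by
    by_contra hcon
    push_neg at hcon
    have hex : ∀ p : ↥P, ∃ D, IsClubIn D k ∧ T p.1 ∩ D = ∅ := by
      intro p
      have h1 := hcon p.1 p.2
      rw [IsStationaryIn] at h1; push_neg at h1
      obtain ⟨D, hD, hDe⟩ := h1
      exact ⟨D, hD, hDe⟩
    choose D hD1 hD2 using hex
    have hbig : IsClubIn (⋂ p : ↥P, D p) k :=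
      isClubIn_iInter hk (by rw [hcof]; exact hPcard) hD1
    obtain ⟨α, hαS1, hαd⟩ := hS1 _ hbig
    have hp : b α ∩ Set.Iio α ∈ P := by
      refine ⟨hαS1.2, ?_⟩
      exact le_trans (Cardinal.mk_le_mk_of_subset Set.inter_subset_left) (hb2 α hαS1.1)
    have hmem : α ∈ T (b α ∩ Set.Iio α) ∩ D ⟨_, hp⟩ :=
      ⟨⟨hαS1, rfl⟩, Set.mem_iInter.mp hαd ⟨_, hp⟩⟩
    rw [hD2 ⟨_, hp⟩] at hmem
    exact hmem
  obtain ⟨p₀, hp₀P, hS2⟩ := step2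
  set S₂ := T p₀ with hS2def
  have hS2sub : S₂ ⊆ S := fun α hα => hα.1.1
  have hroot : ∀ α ∈ S₂, b α ∩ Set.Iio α = p₀ := fun α hα => hα.2
  -- Step 3 : closure points
  have hbound : ∀ α, ∃ μ, μ < k ∧ (α ∈ S₂ → b α ⊆ Set.Iio μ) := by
    intro α
    by_cases hα : α ∈ S₂
    · obtain ⟨μ, hμ, hsub⟩ := exists_bound hk
        (Cardinal.le_aleph0_iff_set_countable.mp (hb2 α (hS2sub hα)))
        (hb1 α (hS2sub hα))
      exact ⟨μ, hμ, fun _ => hsub⟩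
    · exact ⟨0, hlim.pos, fun h => absurd h hα⟩
  choose μ hμk hμb using hbound
  set Cs : Set Ordinal.{u} :=
    {β | β < k ∧ ∀ α < β, α ∈ S₂ → b α ⊆ Set.Iio β} with hCsdef
  have hCsclub : IsClubIn Cs k := by
    refine ⟨fun x hx => hx.1, ?_, ?_⟩
    · intro x hx
      set h : Ordinal.{u} → Ordinal.{u} := fun y =>
        if hy : y < k then max (y + 1) (Ordinal.bsup (y + 1) fun α _ => μ α) else 0 with hhdef
      have hh : ∀ y < k, y < h y ∧ h y < k := by
        intro y hy
        have hy1 : y + 1 < k := by rw [Ordinal.add_one_eq_succ]; exact hlim.succ_lt hy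
        rw [hhdef]; simp only [dif_pos hy]
        constructor
        · refine lt_of_lt_of_le ?_ (le_max_left _ _)
          rw [Ordinal.add_one_eq_succ]; exact Order.lt_succ y
        · refine max_lt hy1 (Ordinal.bsup_lt_ord (hcard _ hy1) fun i hi => hμk i)
      obtain ⟨δ, hγδ, hδk, hδ0, s, hs0, hsucc, hsk, hsδ, hcof'⟩ := omega_limit hk h hh hx
      refine ⟨δ, ⟨hδk, fun α hα hαS2 => ?_⟩, hγδ, hδk⟩
      obtain ⟨n, hn⟩ := hcof' α hα
      have hαn1 : α < s n + 1 := by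
        rw [Ordinal.add_one_eq_succ]; exact lt_trans hn (Order.lt_succ _)
      have hμle : μ α ≤ h (s n) := by
        rw [hhdef]; simp only [dif_pos (hsk n)]
        exact le_trans (Ordinal.le_bsup _ α hαn1) (le_max_right _ _)
      have hμδ : μ α < δ := lt_of_le_of_lt (hμle.trans_eq (hsucc n).symm) (hsδ (n + 1))
      exact fun v hv => lt_trans (hμb α hαS2 hv) hμδ
    · intro δ hδk hδ0 hacc
      refine ⟨hδk, fun α hα hαS2 v hv => ?_⟩
      obtain ⟨β, hβ, h1, h2⟩ := hacc α hα
      exact lt_trans (hβ.2 α h1 hαS2 hv) h2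
  refine ⟨S₂ ∩ Cs, fun α hα => hS2sub hα.1,
    isStationaryIn_inter_club hk hS2 hCsclub, p₀, ?_⟩
  have key : ∀ α ∈ S₂ ∩ Cs, ∀ β ∈ S₂ ∩ Cs, α < β → b α ∩ b β = p₀ := by
    intro α hα β hβ hlt
    apply Set.Subset.antisymm
    · intro x hx
      have hbab : b α ⊆ Set.Iio β := hβ.2.2 α hlt hα.1
      have hmem : x ∈ b β ∩ Set.Iio β := ⟨hx.2, hbab hx.1⟩
      rwa [hroot β hβ.1] at hmem
    · intro x hx
      have h1 : x ∈ b α ∩ Set.Iio α := by rw [hroot α hα.1]; exact hx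
      have h2 : x ∈ b β ∩ Set.Iio β := by rw [hroot β hβ.1]; exact hx
      exact ⟨h1.1, h2.1⟩
  intro α hα β hβ hne
  rcases hne.lt_or_gt with h | h
  · exact key α hα β hβ h
  · rw [Set.inter_comm]; exact key β hβ α hα h

end DeltaAux

/-- Δ-system refinement on stationary sets of ordinals of
uncountable cofinality, for families of countable sets (Lemma 5.4(a) for the
club filter with `θ = ℵ₁`). -/
theorem stmt6 {V : Type u} (κ : Cardinal.{u})
    (hreg : κ.IsRegular) (hunc : Cardinal.aleph0 < κ)
    (hsmall : ∀ α : Ordinal.{u}, α < κ.ord → α.card ^ Cardinal.aleph0 < κ)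
    (S : Set Ordinal.{u})
    (hSsub : S ⊆ {δ | δ < κ.ord ∧ Cardinal.aleph0 < δ.cof})
    (hSstat : IsStationaryIn S κ.ord)
    (B : Ordinal.{u} → Set V)
    (hB : ∀ α ∈ S, Cardinal.mk (B α) ≤ Cardinal.aleph0) :
    ∃ Z ⊆ S, IsStationaryIn Z κ.ord ∧
      ∃ Bs : Set V, ∀ α ∈ Z, ∀ β ∈ Z, α ≠ β → B α ∩ B β = Bs := by
  classical
  set k := κ.ord with hkdef
  have hSk : S ⊆ Set.Iio k := fun δ hδ => (hSsub hδ).1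
  have hlim : Order.IsSuccLimit k := Cardinal.isSuccLimit_ord hreg.aleph0_le
  have hSne : S.Nonempty := by
    obtain ⟨x, hx⟩ := hSstat _ (DeltaAux.isClubIn_Iio hlim)
    exact ⟨x, hx.1⟩
  set U : Set V := ⋃ α : ↥S, B α.1 with hU
  have hBU : ∀ α ∈ S, B α ⊆ U := fun α hα v hv => Set.mem_iUnion.mpr ⟨⟨α, hα⟩, hv⟩
  have hmkU : Cardinal.lift.{u + 1} #↥U ≤ Cardinal.lift.{u + 1} κ := by
    have hNe : Nonempty ↥S := hSne.to_subtype
    have h1 := Cardinal.mk_iUnion_le_lift (α := V) (ι := ↥S) (fun α => B α.1)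
    have h2 : (⨆ i : ↥S, Cardinal.lift.{u + 1} #↥(B i.1)) ≤ (ℵ₀ : Cardinal.{u + 1}) :=
      ciSup_le' fun i => by
        rw [← Cardinal.lift_aleph0.{u + 1, u}]
        exact Cardinal.lift_le.mpr (hB i.1 i.2)
    have h3 : Cardinal.lift.{u} #↥S ≤ Cardinal.lift.{u + 1} κ := by
      calc Cardinal.lift.{u} #↥S ≤ Cardinal.lift.{u} #↥(Set.Iio k) :=
            Cardinal.lift_le.mpr (Cardinal.mk_le_mk_of_subset hSk)
        _ = Cardinal.lift.{u} (Cardinal.lift.{u + 1} k.card) := by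
            rw [Ordinal.mk_Iio_ordinal]
        _ = Cardinal.lift.{u + 1} κ := by
            rw [Cardinal.lift_id'.{u, u + 1}, hkdef, Cardinal.card_ord]
    have haleph : (ℵ₀ : Cardinal.{u + 1}) ≤ Cardinal.lift.{u + 1} κ := by
      rw [← Cardinal.lift_aleph0.{u + 1, u}]
      exact Cardinal.lift_le.mpr hunc.le
    calc Cardinal.lift.{u + 1} #↥U
        ≤ Cardinal.lift.{u} #↥S * ⨆ i : ↥S, Cardinal.lift.{u + 1} #↥(B i.1) := h1
      _ ≤ Cardinal.lift.{u + 1} κ * (ℵ₀ : Cardinal.{u + 1}) :=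
          mul_le_mul' h3 h2
      _ = Cardinal.lift.{u + 1} κ :=
          Cardinal.mul_eq_left haleph haleph Cardinal.aleph0_ne_zero
  have hemb : Nonempty (↥U ↪ ↥(Set.Iio k)) := by
    rw [← Cardinal.lift_mk_le']
    calc Cardinal.lift.{u + 1} #↥U ≤ Cardinal.lift.{u + 1} κ := hmkU
      _ = Cardinal.lift.{u} #↥(Set.Iio k) := by
          rw [Ordinal.mk_Iio_ordinal, Cardinal.lift_id'.{u, u + 1}, hkdef, Cardinal.card_ord]
  obtain ⟨e⟩ := hemb
  set j : V → Ordinal.{u} := fun v => if h : v ∈ U then (e ⟨v, h⟩).1 else 0 with hj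
  have hjk : ∀ v ∈ U, j v < k := fun v hv => by
    rw [hj]; simp only [dif_pos hv]; exact (e ⟨v, hv⟩).2
  have hjinj : ∀ v ∈ U, ∀ w ∈ U, j v = j w → v = w := by
    intro v hv w hw h
    rw [hj] at h; simp only [dif_pos hv, dif_pos hw] at h
    have h2 := e.injective (Subtype.ext h)
    exact congrArg Subtype.val h2
  set b : Ordinal.{u} → Set Ordinal.{u} := fun α => j '' B α with hb
  have hb1 : ∀ α ∈ S, b α ⊆ Set.Iio k := by
    rintro α hα x ⟨v, hv, rfl⟩
    exact hjk v (hBU α hα hv)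
  have hb2 : ∀ α ∈ S, #↥(b α) ≤ ℵ₀ := by
    intro α hα
    have h1 : Cardinal.lift.{u} #↥(j '' B α) ≤ Cardinal.lift.{u + 1} #↥(B α) :=
      Cardinal.mk_image_le_lift
    rw [Cardinal.lift_id'.{u, u + 1}] at h1
    refine h1.trans ?_
    rw [← Cardinal.lift_aleph0.{u + 1, u}]
    exact Cardinal.lift_le.mpr (hB α hα)
  obtain ⟨Z, hZsub, hZstat, r, hr⟩ :=
    DeltaAux.delta_ord κ hreg hunc hsmall S hSsub hSstat b hb1 hb2
  refine ⟨Z, hZsub, hZstat, U ∩ j ⁻¹' r, ?_⟩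
  intro α hα β hβ hne
  ext v
  constructor
  · intro hv
    have hvU : v ∈ U := hBU α (hZsub hα) hv.1
    refine ⟨hvU, ?_⟩
    show j v ∈ r
    rw [← hr α hα β hβ hne]
    exact ⟨⟨v, hv.1, rfl⟩, ⟨v, hv.2, rfl⟩⟩
  · rintro ⟨hvU, hvr⟩
    have hmem : j v ∈ b α ∩ b β := by
      rw [hr α hα β hβ hne]; exact hvr
    obtain ⟨w, hw, hjw⟩ := hmem.1
    obtain ⟨w', hw', hjw'⟩ := hmem.2
    have hwv : w = v := hjinj w (hBU α (hZsub hα) hw) v hvU hjw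
    have hwv' : w' = v := hjinj w' (hBU β (hZsub hβ) hw') v hvU hjw'
    exact ⟨hwv ▸ hw, hwv' ▸ hw'⟩
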